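/- Let F be a commutative unital ring such that Der(F) is a free F-module with finite basis {∂_i}, let ρ be an F-module endomorphism of Der(F), and let [,]• be the bracket defined by [X,Y]• = X•Y − Y•X with X•Y = Σ_i Yⁱ·(X∘∂_i) + ρ(X)(Yⁱ)·∂_i. Then for all X, Y ∈ Der(F) and all f ∈ F, the compatibility condition [X, f·Y]• = f·[X,Y]• + ρ(X)(f)·Y holds (as additive endomorphisms of F). -/

import Mathlib

/-- The operation `X • Y = Σ_i Yⁱ·(X∘∂_i) + ρ(X)(Yⁱ)·∂_i`, as an additive endomorphism
of `F`, where `Yⁱ` are the coordinates of `Y` in the basis `{∂_i}` of `Der(F)`. -/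
noncomputable def derBullet {F : Type*} [CommRing F] {ι : Type*} [Fintype ι]
    (b : Module.Basis ι F (Derivation ℤ F F))
    (ρ : Derivation ℤ F F →ₗ[F] Derivation ℤ F F)
    (X Y : Derivation ℤ F F) : F → F :=
  fun f => ∑ i, (b.repr Y i * X (b i f) + (ρ X) (b.repr Y i) * b i f)

/-- The bracket `[X,Y]• = X•Y − Y•X`, as an additive endomorphism of `F`. -/
noncomputable def derBulletBracket {F : Type*} [CommRing F] {ι : Type*} [Fintype ι]
    (b : Module.Basis ι F (Derivation ℤ F F))
    (ρ : Derivation ℤ F F →ₗ[F] Derivation ℤ F F)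
    (X Y : Derivation ℤ F F) : F → F :=
  fun f => derBullet b ρ X Y f - derBullet b ρ Y X f

/-- Evaluation at a point, as an `F`-linear map on derivations. -/
noncomputable def derEval {F : Type*} [CommRing F] (g : F) :
    Derivation ℤ F F →ₗ[F] F where
  toFun D := D g
  map_add' D E := rfl
  map_smul' f D := rfl

lemma sum_repr_apply {F : Type*} [CommRing F] {ι : Type*} [Fintype ι]
    (b : Module.Basis ι F (Derivation ℤ F F)) (Y : Derivation ℤ F F) (g : F) :
    ∑ i, b.repr Y i * b i g = Y g := by
  have h := b.sum_repr Y
  calc ∑ i, b.repr Y i * b i g = ∑ i, derEval g (b.repr Y i • b i) := by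
        simp [derEval, smul_eq_mul]
    _ = derEval g (∑ i, b.repr Y i • b i) := (map_sum _ _ _).symm
    _ = Y g := by rw [h]; rfl

/-- If `Der(F)` is a free `F`-module with finite basis `{∂_i}` and `ρ`
is an `F`-module endomorphism of `Der(F)`, then the bracket `[X,Y]• = X•Y − Y•X`
satisfies the compatibility condition `[X, f·Y]• = f·[X,Y]• + ρ(X)(f)·Y`, as additive
endomorphisms of `F`. -/
theorem derBulletBracket_compat
    {F : Type*} [CommRing F] {ι : Type*} [Fintype ι]
    (b : Module.Basis ι F (Derivation ℤ F F))
    (ρ : Derivation ℤ F F →ₗ[F] Derivation ℤ F F)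
    (X Y : Derivation ℤ F F) (f : F) (g : F) :
    derBulletBracket b ρ X (f • Y) g
      = f * derBulletBracket b ρ X Y g + (ρ X) f * Y g := by
  have hrepr : ∀ i, b.repr (f • Y) i = f * b.repr Y i := by
    intro i; rw [map_smul]; rfl
  have hρ : ρ (f • Y) = f • ρ Y := map_smul ρ f Y
  simp only [derBulletBracket, derBullet, hrepr, hρ,
    Derivation.smul_apply, smul_eq_mul, Derivation.leibniz, Derivation.coe_smul,
    Pi.smul_apply]
  rw [← sum_repr_apply b Y g]
  simp only [Finset.mul_sum, Finset.sum_mul, ← Finset.sum_sub_distrib,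
    ← Finset.sum_add_distrib]
  apply Finset.sum_congr rfl
  intro i _
  ring
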